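/- arXiv:1103.5195 — 3 statements merged into one kernel-verified Lean document; each statement's English description precedes it below -/
import Mathlib

section
/- Let $\theta$ be an infinite cardinal with countable cofinality $\mathrm{cf}(\theta) = \aleph_0$. Then there exists a coloring $c : \theta \times \omega \to 2$ such that for every $H \subseteq \theta$ with $|H| = \theta$ and every infinite $B \subseteq \omega$, the restriction of $c$ to $H \times B$ is not constant. In other words, $\binom{\theta}{\omega} \not\to \binom{\theta}{\omega}^{1,1}_2$. -/
open Cardinal Ordinal

/-- If `cf(θ) = ℵ₀` then the strong polarized relation `(θ, ω) → (θ, ω)` fails. -/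
theorem negative_countable_cofinality (θ : Cardinal) (hθ : ℵ₀ ≤ θ)
    (hcof : θ.ord.cof = ℵ₀) :
    ∃ c : θ.ord.ToType × ℕ → Fin 2,
      ∀ (H : Set θ.ord.ToType) (B : Set ℕ),
        #H = θ → B.Infinite →
          ¬ ∃ i : Fin 2, ∀ α ∈ H, ∀ n ∈ B, c (α, n) = i := by
  classical
  obtain ⟨f, hf⟩ := Ordinal.exists_fundamental_sequence θ.ord
  have hcord : θ.ord.cof.ord = Ordinal.omega0 := by rw [hcof, ord_aleph0]
  have hnat : ∀ n : ℕ, (n : Ordinal) < θ.ord.cof.ord := by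
    intro n; rw [hcord]; exact nat_lt_omega0 n
  set g : ℕ → Ordinal := fun n => f n (hnat n) with hg
  have hglt : ∀ n, g n < θ.ord := fun n => hf.2.2 ▸ Ordinal.lt_blsub f _ _
  have hgmono : ∀ {m n : ℕ}, m ≤ n → g m ≤ g n := by
    intro m n hmn
    rcases eq_or_lt_of_le hmn with h | h
    · subst h; rfl
    · exact le_of_lt (hf.strict_mono _ _ (by exact_mod_cast h))
  set T : θ.ord.ToType → Ordinal :=
    fun x => @typein θ.ord.ToType (· < ·) (@isWellOrder_lt _ _ _) x with hT
  set c : θ.ord.ToType × ℕ → Fin 2 :=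
    fun p => if T p.1 < g p.2 then (0 : Fin 2) else 1 with hc
  refine ⟨c, fun H B hH hB h => ?_⟩
  obtain ⟨i, hi⟩ := h
  fin_cases i
  · -- color 0 : all of H is below a single level, too small
    obtain ⟨n, hn⟩ := hB.nonempty
    have hsub : ∀ α ∈ H, T α < g n := by
      intro α hα
      have := hi α hα n hn
      by_contra hcon
      simp [hc, hcon] at this
    set x : θ.ord.ToType := @enum θ.ord.ToType (· < ·) (@isWellOrder_lt _ _ _)
      ⟨g n, by rw [type_toType]; exact hglt n⟩ with hx
    have hHsub : H ⊆ Set.Iio x := by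
      intro α hα
      have h1 := hsub α hα
      have h2 : T x = g n := @typein_enum θ.ord.ToType (· < ·) (@isWellOrder_lt _ _ _) _ _
      rw [← h2] at h1
      exact (@typein_lt_typein θ.ord.ToType (· < ·) (@isWellOrder_lt _ _ _) α x).mp h1
    have hcard : #(Set.Iio x) < θ := by
      have h3 : T x < θ.ord := typein_lt_self x
      rw [Cardinal.lt_ord] at h3
      have h4 : (T x).card = #{y : θ.ord.ToType // y < x} :=
        @card_typein θ.ord.ToType (· < ·) (@isWellOrder_lt _ _ _) x
      rwa [h4] at h3
    have h5 := Cardinal.mk_le_mk_of_subset hHsub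
    rw [hH] at h5
    exact absurd h5 (not_le.mpr hcard)
  · -- color 1 : a fixed α ∈ H bounds all levels g n for n ∈ B
    have hne : H.Nonempty := by
      rw [← Set.nonempty_coe_sort, ← Cardinal.mk_ne_zero_iff, hH]
      exact ne_of_gt (lt_of_lt_of_le aleph0_pos hθ)
    obtain ⟨α, hα⟩ := hne
    have hbound : ∀ n ∈ B, g n ≤ T α := by
      intro n hn
      have := hi α hα n hn
      by_contra hcon
      rw [not_le] at hcon
      simp [hc, hcon] at this
    have hlt : T α + 1 < θ.ord :=
      Ordinal.add_one_eq_succ (T α) ▸ (Cardinal.isSuccLimit_ord hθ).succ_lt (typein_lt_self α)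
    rw [← hf.2.2] at hlt
    obtain ⟨b, hb, hble⟩ := Ordinal.lt_blsub_iff.mp hlt
    obtain ⟨m, rfl⟩ := Ordinal.lt_omega0.mp (hcord ▸ hb)
    have hm : T α < g m := by
      have : T α + 1 ≤ f m hb := hble
      have h4 : g m = f m hb := rfl
      rw [h4]
      exact lt_of_lt_of_le (Order.lt_add_one_iff.mpr le_rfl) this
    obtain ⟨k, hkB, hk⟩ := hB.exists_gt m
    exact absurd (hbound k hkB) (not_le.mpr (lt_of_lt_of_le hm (hgmono hk.le)))
end

section
/- Let $\theta$ be a cardinal with $\aleph_0 \leq \theta < \mathfrak{s}$ (the splitting number) and $\mathrm{cf}(\theta) > \aleph_0$. Then $\binom{\theta}{\omega} \to \binom{\theta}{\omega}^{1,1}_2$: for every coloring $c : \theta \times \omega \to 2$ there exist $H \subseteq \theta$ with $|H| = \theta$ and an infinite $B \subseteq \omega$ such that $c$ is constant on $H \times B$. -/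
open Cardinal

/-- A family `F` of subsets of `ℕ` is splitting if every infinite `B ⊆ ℕ` is
split by some member of `F`. -/
def IsSplittingFamily (F : Set (Set ℕ)) : Prop :=
  ∀ B : Set ℕ, B.Infinite → ∃ S ∈ F, (B ∩ S).Infinite ∧ (B \ S).Infinite

/-- The splitting number `𝔰`. -/
noncomputable def splittingNumber : Cardinal :=
  sInf { c : Cardinal | ∃ F : Set (Set ℕ), #F = c ∧ IsSplittingFamily F }

/-- Below `𝔰`, uncountable cofinality implies the strong polarized relation
`(θ, ω) → (θ, ω)` with two colors. -/
theorem polarized_below_splitting (θ : Cardinal) (hθ : ℵ₀ ≤ θ)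
    (hθs : θ < splittingNumber) (hcof : ℵ₀ < θ.ord.cof) :
    ∀ c : θ.ord.ToType × ℕ → Fin 2,
      ∃ (H : Set θ.ord.ToType) (B : Set ℕ) (i : Fin 2),
        #H = θ ∧ B.Infinite ∧ ∀ α ∈ H, ∀ n ∈ B, c (α, n) = i := by
  intro c
  have hmkA : #(θ.ord.ToType) = θ := mk_ord_toType θ
  let S : θ.ord.ToType → Set ℕ := fun α => {n | c (α, n) = 0}
  -- the family of the S α is not splitting
  have hns : ¬ IsSplittingFamily (Set.range S) := by
    intro h
    have h1 : splittingNumber ≤ #(Set.range S) := csInf_le' ⟨Set.range S, rfl, h⟩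
    have h2 : #(Set.range S) ≤ θ := mk_range_le.trans_eq hmkA
    exact absurd (h1.trans h2) (not_le.2 hθs)
  rw [IsSplittingFamily] at hns
  push_neg at hns
  obtain ⟨B, hB, hBsplit⟩ := hns
  -- for each α, B is almost contained in S α or its complement
  have key : ∀ α : θ.ord.ToType, ∃ (i : Fin 2) (m : ℕ), ∀ n ∈ B, m ≤ n → c (α, n) = i := by
    intro α
    have h := hBsplit (S α) (Set.mem_range_self α)
    rcases imp_iff_not_or.mp h with hfin | hfin
    · -- B ∩ S α is finite : color 1 eventually
      rw [Set.not_infinite] at hfin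
      obtain ⟨m, hm⟩ := (Set.Finite.bddAbove hfin)
      refine ⟨1, m + 1, fun n hn hmn => ?_⟩
      have hnS : n ∉ S α := by
        intro hnS
        have := hm ⟨hn, hnS⟩
        omega
      have : c (α, n) ≠ 0 := hnS
      omega
    · -- B \ S α is finite : color 0 eventually
      obtain ⟨m, hm⟩ := (Set.Finite.bddAbove hfin)
      refine ⟨0, m + 1, fun n hn hmn => ?_⟩
      by_contra hne
      have hnS : n ∉ S α := hne
      have := hm ⟨hn, hnS⟩
      omega
  choose i m hm using key
  -- pigeonhole : some pair (i, m) occurs on a set of full size θ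
  let f : θ.ord.ToType → ULift.{_} (Fin 2 × ℕ) := fun α => ULift.up (i α, m α)
  have hcard : #(ULift.{_} (Fin 2 × ℕ)) < (#(θ.ord.ToType)).ord.cof := by
    rw [hmkA]
    have : #(ULift.{_} (Fin 2 × ℕ)) = ℵ₀ := by
      simp [mk_uLift, lift_aleph0]
    rw [this]
    exact hcof
  have hA0 : ℵ₀ ≤ #(θ.ord.ToType) := hmkA.symm ▸ hθ
  obtain ⟨⟨i0, m0⟩, hfib⟩ := Cardinal.infinite_pigeonhole f hA0 hcard
  refine ⟨f ⁻¹' {ULift.up (i0, m0)}, B \ Set.Iio m0, i0, ?_, ?_, ?_⟩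
  · rw [hfib, hmkA]
  · exact hB.diff (Set.finite_Iio m0)
  · rintro α hα n ⟨hnB, hn⟩
    have hfa : f α = ULift.up (i0, m0) := hα
    have h1 : i α = i0 := congrArg (fun p => p.down.1) hfa
    have h2 : m α = m0 := congrArg (fun p => p.down.2) hfa
    have := hm α n hnB (h2 ▸ not_lt.mp hn)
    rwa [h1] at this
end

section
/- Let $\theta$ be a cardinal with $\aleph_0 \leq \theta < \mathfrak{s}$. Then $\binom{\theta}{\omega} \to \binom{\theta}{\omega}^{1,1}_2$ holds if and only if $\mathrm{cf}(\theta) > \aleph_0$. -/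
open Cardinal

lemma splittingNumber_le {F : Set (Set ℕ)} (hF : IsSplittingFamily F) :
    splittingNumber ≤ #F :=
  csInf_le' ⟨F, rfl, hF⟩

lemma mk_Iic_lt (θ : Cardinal) (hθ : ℵ₀ ≤ θ) (b : θ.ord.ToType) :
    #(Set.Iic b) < θ := by
  have h1 : #(Set.Iio b) < θ := Cardinal.mk_Iio_ord_toType b
  have h2 : (Set.Iic b : Set θ.ord.ToType) = insert b (Set.Iio b) := by
    ext x; simp [le_iff_lt_or_eq, or_comm]
  rw [h2]
  exact lt_of_le_of_lt Cardinal.mk_insert_le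
    (Cardinal.add_lt_of_lt hθ h1 (lt_of_lt_of_le Cardinal.one_lt_aleph0 hθ))

/-- For `ℵ₀ ≤ θ < 𝔰`, the strong polarized relation `(θ, ω) → (θ, ω)` with two
colors holds iff `cf(θ) > ℵ₀`. -/
theorem polarized_below_splitting_iff (θ : Cardinal) (hθ : ℵ₀ ≤ θ)
    (hθs : θ < splittingNumber) :
    (∀ c : θ.ord.ToType × ℕ → Fin 2,
      ∃ (H : Set θ.ord.ToType) (B : Set ℕ) (i : Fin 2),
        #H = θ ∧ B.Infinite ∧ ∀ α ∈ H, ∀ n ∈ B, c (α, n) = i)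
      ↔ ℵ₀ < θ.ord.cof := by
  have hmk : #θ.ord.ToType = θ := Cardinal.mk_ord_toType θ
  constructor
  · -- forward: relation implies cf > ℵ₀
    intro hrel
    by_contra hcof
    push_neg at hcof
    -- get a countable unbounded set
    haveI : IsWellOrder θ.ord.ToType (· < ·) := isWellOrder_lt
    obtain ⟨S, hSub, hScard⟩ : ∃ S : Set θ.ord.ToType, (∀ a, ∃ b ∈ S, ¬ b < a) ∧
        Cardinal.mk S = (Ordinal.type ((· < ·) : θ.ord.ToType → θ.ord.ToType → Prop)).cof := by
      obtain ⟨S, h1, h2⟩ := Order.exists_cof_eq θ.ord.ToType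
      exact ⟨S, fun a => (h1 a).imp fun b hb => ⟨hb.1, not_lt.mpr hb.2⟩,
        by rw [h2, Ordinal.type_toType, Ordinal.cof_toType]⟩
    rw [Ordinal.type_toType] at hScard
    have hScount : S.Countable := by
      rw [← Set.countable_coe_iff, ← Cardinal.mk_le_aleph0_iff, hScard]
      exact hcof
    have hSne : S.Nonempty := by
      have : Nonempty θ.ord.ToType := by
        rw [Ordinal.toType_nonempty_iff_ne_zero]
        intro h
        have hmk2 := hmk
        rw [Cardinal.ord_eq_zero] at h
        exact Cardinal.aleph0_ne_zero (le_zero_iff.mp (hθ.trans_eq h))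
      obtain ⟨a⟩ := this
      obtain ⟨b, hb, _⟩ := hSub a
      exact ⟨b, hb⟩
    obtain ⟨f, hf⟩ := hScount.exists_eq_range hSne
    -- monotone cofinal sequence
    set g : ℕ → θ.ord.ToType := fun n => (Finset.range (n + 1)).sup' ⟨0, by simp⟩ f with hg
    have hfg : ∀ k n, k ≤ n → f k ≤ g n := fun k n hkn =>
      Finset.le_sup' f (by simp [Nat.lt_succ_of_le hkn])
    have hgmono : ∀ k n, k ≤ n → g k ≤ g n := by
      intro k n hkn
      exact Finset.sup'_mono f (Finset.range_subset_range.mpr (by omega)) _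
    -- the bad coloring
    obtain ⟨H, B, i, hH, hB, hconst⟩ :=
      hrel (fun p => if p.1 ≤ g p.2 then 1 else 0)
    fin_cases i
    · -- color 0 : every α ∈ H is above all g n with n ∈ B, contradicting unboundedness
      have hHne : H.Nonempty := by
        rw [← Set.nonempty_coe_sort, ← Cardinal.mk_ne_zero_iff, hH]
        exact fun h => Cardinal.aleph0_ne_zero (le_zero_iff.mp (hθ.trans_eq h))
      obtain ⟨α, hα⟩ := hHne
      obtain ⟨s, hs, hαs⟩ := hSub α
      obtain ⟨k, rfl⟩ : ∃ k, f k = s := by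
        have := hf ▸ hs; exact this
      obtain ⟨n, hn, hkn⟩ := hB.exists_gt k
      have h1 := hconst α hα n hn
      simp only at h1
      have h2 : α ≤ g n := le_trans (not_lt.mp hαs) (hfg k n hkn.le)
      rw [if_pos h2] at h1
      exact absurd h1 (by decide)
    · -- color 1 : H is contained in a small initial segment
      obtain ⟨n, hn⟩ := hB.nonempty
      have hsub : H ⊆ Set.Iic (g n) := by
        intro α hα
        have h1 := hconst α hα n hn
        simp only at h1
        by_contra hc
        rw [if_neg (by simpa using hc)] at h1
        exact absurd h1 (by decide)
      have := (Cardinal.mk_le_mk_of_subset hsub).trans_lt (mk_Iic_lt θ hθ (g n))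
      rw [hH] at this
      exact lt_irrefl θ this
  · -- backward: cf > ℵ₀ implies relation
    intro hcof c
    have hθ' : ℵ₀ < θ := hcof.trans_le (Ordinal.cof_ord_le θ)
    -- the family of sections is not splitting
    set S : θ.ord.ToType → Set ℕ := fun α => {n | c (α, n) = 1} with hS
    have hns : ¬ IsSplittingFamily (Set.range S) := by
      intro hsp
      have h1 : splittingNumber ≤ #(Set.range S) := splittingNumber_le hsp
      have h2 : #(Set.range S) ≤ θ := Cardinal.mk_range_le.trans hmk.le
      exact absurd ((h1.trans h2).trans_lt hθs) (lt_irrefl _)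
    rw [IsSplittingFamily] at hns
    push_neg at hns
    obtain ⟨B, hB, hBsplit⟩ := hns
    -- for each α, the color c(α, ·) is eventually constant on B
    have key : ∀ α : θ.ord.ToType, ∃ (i : Fin 2) (m : ℕ),
        ∀ n ∈ B, m ≤ n → c (α, n) = i := by
      intro α
      have := hBsplit (S α) ⟨α, rfl⟩
      by_cases h : (B ∩ S α).Infinite
      · have hfin : (B \ S α).Finite := (this h)
        obtain ⟨m, hm⟩ := hfin.bddAbove
        refine ⟨1, m + 1, fun n hn hmn => ?_⟩
        by_contra hc
        have : n ∈ B \ S α := ⟨hn, fun hns => hc hns⟩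
        have := hm this
        omega
      · have hfin : (B ∩ S α).Finite := Set.not_infinite.mp h
        obtain ⟨m, hm⟩ := hfin.bddAbove
        refine ⟨0, m + 1, fun n hn hmn => ?_⟩
        by_contra hc
        have hn1 : c (α, n) = 1 := by omega
        have : n ∈ B ∩ S α := ⟨hn, hn1⟩
        have := hm this
        omega
    choose i m hkey using key
    set g : θ.ord.ToType → ℕ × Fin 2 := fun α => (m α, i α) with hgdef
    -- some fiber of g has full cardinality θ
    have fiber : ∃ b : ℕ × Fin 2, θ ≤ #(g ⁻¹' {b}) := by
      by_contra hfib
      push_neg at hfib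
      have hsum : #θ.ord.ToType ≤ Cardinal.sum fun b : ℕ × Fin 2 => #(g ⁻¹' {b}) := by
        rw [← Cardinal.mk_sigma]
        exact le_of_eq (Cardinal.mk_congr ((Equiv.sigmaFiberEquiv g).symm.trans
          (Equiv.sigmaCongrRight fun b => Equiv.subtypeEquivRight fun x => Iff.rfl)))
      have h1 : Cardinal.sum (fun b : ℕ × Fin 2 => #(g ⁻¹' {b})) ≤
          #(ℕ × Fin 2) * ⨆ b : ℕ × Fin 2, #(g ⁻¹' {b}) := Cardinal.sum_le_mk_mul_iSup _
      have hι : #(ℕ × Fin 2) ≤ ℵ₀ := Cardinal.mk_le_aleph0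
      have hsup : (⨆ b : ℕ × Fin 2, #(g ⁻¹' {b})) < θ :=
        Cardinal.iSup_lt_of_lt_cof_ord (hι.trans_lt hcof) hfib
      have : #θ.ord.ToType < θ := by
        calc #θ.ord.ToType ≤ _ := hsum
        _ ≤ #(ℕ × Fin 2) * ⨆ b : ℕ × Fin 2, #(g ⁻¹' {b}) := h1
        _ < θ := Cardinal.mul_lt_of_lt hθ (hι.trans_lt hθ') hsup
      rw [hmk] at this
      exact lt_irrefl θ this
    obtain ⟨⟨m₀, i₀⟩, hb⟩ := fiber
    refine ⟨g ⁻¹' {(m₀, i₀)}, {n ∈ B | m₀ ≤ n}, i₀, ?_, ?_, ?_⟩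
    · exact le_antisymm ((Cardinal.mk_set_le _).trans_eq hmk) hb
    · have : {n ∈ B | m₀ ≤ n} = B \ {n | n < m₀} := by
        ext n; simp [not_lt]
      rw [this]
      exact hB.diff (Set.finite_Iio m₀)
    · rintro α hα n ⟨hnB, hmn⟩
      have hgα : g α = (m₀, i₀) := hα
      have h1 : m α = m₀ := congrArg Prod.fst hgα
      have h2 : i α = i₀ := congrArg Prod.snd hgα
      rw [← h2]
      exact hkey α n hnB (h1 ▸ hmn)
end
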